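/- Second-moment identity for the |Γ|⁴ density: for a > 0 and b > 0, (bΓ(4a)/(2πΓ(2a)⁴)) ∫_{−∞}^{∞} s² |Γ(a + ibs)|⁴ ds = a²/(b²(1 + 4a)). -/

import Mathlib

open Real Complex MeasureTheory Set FourierTransform

noncomputable def GG (A x : ℝ) : ℝ := (2 * Real.cosh (x/2)) ^ (-(2*A))

lemma two_cosh_pos (x : ℝ) : 0 < 2 * Real.cosh (x/2) := by positivity

lemma GG_pos (A x : ℝ) : 0 < GG A x := Real.rpow_pos_of_pos (two_cosh_pos x) _

noncomputable def sg (y : ℝ) : ℝ := Real.exp y / (1 + Real.exp y)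

lemma one_add_exp_pos (y : ℝ) : 0 < 1 + Real.exp y := by positivity

lemma hasDerivAt_sg (y : ℝ) :
    HasDerivAt sg (Real.exp y / (1 + Real.exp y)^2) y := by
  have h : HasDerivAt (fun y => Real.exp y / (1 + Real.exp y))
      ((Real.exp y * (1 + Real.exp y) - Real.exp y * (0 + Real.exp y)) / (1 + Real.exp y)^2) y :=
    (Real.hasDerivAt_exp y).div ((hasDerivAt_const y 1).add (Real.hasDerivAt_exp y))
      (one_add_exp_pos y).ne'
  convert h using 1
  · rfl
  · ring

lemma sg_mem (y : ℝ) : sg y ∈ Ioo (0:ℝ) 1 := by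
  constructor
  · exact div_pos (Real.exp_pos y) (one_add_exp_pos y)
  · rw [sg, div_lt_one (one_add_exp_pos y)]; linarith

lemma sg_strictMono : StrictMono sg := by
  intro x y h
  have hx := one_add_exp_pos x
  have hy := one_add_exp_pos y
  rw [sg, sg, div_lt_div_iff₀ hx hy]
  have := Real.exp_lt_exp.2 h
  nlinarith

lemma sg_image : sg '' Set.univ = Set.Ioo (0:ℝ) 1 := by
  apply Set.eq_of_subset_of_subset
  · rintro x ⟨y, -, rfl⟩; exact sg_mem y
  · rintro x ⟨hx0, hx1⟩
    refine ⟨Real.log (x / (1 - x)), Set.mem_univ _, ?_⟩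
    have h1x : 0 < 1 - x := by linarith
    have hpos : 0 < x / (1 - x) := div_pos hx0 h1x
    rw [sg, Real.exp_log hpos]
    field_simp
    ring

lemma cpow_pos_real {r : ℝ} (hr : 0 < r) (w : ℂ) :
    (r : ℂ) ^ w = Complex.exp (w * (Real.log r : ℂ)) := by
  rw [Complex.cpow_def_of_ne_zero (by exact_mod_cast hr.ne'), Complex.ofReal_log hr.le, mul_comm]

lemma sg_point (A t y : ℝ) :
    |Real.exp y / (1 + Real.exp y)^2| •
      ((sg y : ℂ) ^ ((↑A + ↑t*Complex.I) - 1) * ((1:ℂ) - (sg y : ℂ)) ^ ((↑A - ↑t*Complex.I) - 1))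
    = Complex.exp (↑t*↑y*Complex.I) * (GG A y : ℂ) := by
  set E := Real.exp y with hE
  set M := Real.log (1 + E) with hM
  have hEpos : 0 < E := Real.exp_pos y
  have h1E : 0 < 1 + E := one_add_exp_pos y
  have hsgpos : 0 < sg y := (sg_mem y).1
  have hsg1 : sg y < 1 := (sg_mem y).2
  -- logs
  have hlog_sg : Real.log (sg y) = y - M := by
    rw [sg, Real.log_div hEpos.ne' h1E.ne', hE, Real.log_exp]
  have hone_sub : (1 : ℝ) - sg y = (1 + E)⁻¹ := by
    rw [sg]; field_simp; rw [hE]; ring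
  have hlog_one_sub : Real.log (1 - sg y) = -M := by
    rw [hone_sub, Real.log_inv, hM]
  -- the derivative factor
  have hderiv_pos : 0 < E / (1 + E)^2 := by positivity
  have hderiv_log : Real.log (E / (1 + E)^2) = y - 2*M := by
    rw [Real.log_div hEpos.ne' (by positivity), Real.log_pow, hE, Real.log_exp]
    push_cast; ring
  -- cosh identity
  have hcosh : 2 * Real.cosh (y/2) = (1 + E) * Real.exp (-(y/2)) := by
    have hx : Real.exp y * Real.exp (-(y/2)) = Real.exp (y/2) := by
      rw [← Real.exp_add]; congr 1; ring
    rw [Real.cosh_eq, hE]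
    nlinarith [hx]
  have hlogc : Real.log (2 * Real.cosh (y/2)) = M - y/2 := by
    rw [hcosh, Real.log_mul h1E.ne' (Real.exp_ne_zero _), Real.log_exp, hM]; ring
  have hGG : (GG A y : ℂ) = Complex.exp ((A*y - 2*A*M : ℝ) : ℂ) := by
    rw [GG, Real.rpow_def_of_pos (two_cosh_pos y), hlogc, ← Complex.ofReal_exp]
    norm_num; ring_nf
  -- rewrite cpows
  rw [cpow_pos_real hsgpos, hlog_sg]
  have h1 : ((1:ℂ) - (sg y : ℂ)) = ((1 - sg y : ℝ) : ℂ) := by push_cast; ring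
  rw [h1, cpow_pos_real (by linarith : (0:ℝ) < 1 - sg y), hlog_one_sub]
  have h2 : ((Real.exp y / (1 + Real.exp y)^2 : ℝ) : ℂ) = Complex.exp (((y - 2*M : ℝ) : ℂ)) := by
    rw [← hderiv_log, ← Complex.ofReal_exp, Real.exp_log hderiv_pos]
  rw [abs_of_pos hderiv_pos, Complex.real_smul, h2, hGG, ← Complex.exp_add, ← Complex.exp_add,
    ← Complex.exp_add]
  congr 1
  push_cast
  ring

lemma beta_eq_real_integral (A t : ℝ) :
    Complex.betaIntegral ((A:ℂ) + t*Complex.I) ((A:ℂ) - t*Complex.I)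
      = ∫ y : ℝ, Complex.exp (↑t*↑y*Complex.I) * (GG A y : ℂ) := by
  rw [Complex.betaIntegral, intervalIntegral.integral_of_le zero_le_one,
    integral_Ioc_eq_integral_Ioo, ← sg_image,
    integral_image_eq_integral_abs_deriv_smul MeasurableSet.univ
      (fun y _ => (hasDerivAt_sg y).hasDerivWithinAt) (sg_strictMono.injective.injOn) _,
    Measure.restrict_univ]
  exact integral_congr_ae (Filter.Eventually.of_forall fun y => sg_point A t y)

lemma fourier_GG (A : ℝ) (hA : 0 < A) (t : ℝ) :
    ∫ y : ℝ, Complex.exp (↑t*↑y*Complex.I) * (GG A y : ℂ)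
      = Complex.Gamma ((A:ℂ) + t*Complex.I) * Complex.Gamma ((A:ℂ) - t*Complex.I)
          / (Real.Gamma (2*A) : ℂ) := by
  have hu : 0 < ((A:ℂ) + t*Complex.I).re := by simp [hA]
  have hv : 0 < ((A:ℂ) - t*Complex.I).re := by simp [hA]
  have beta := Complex.Gamma_mul_Gamma_eq_betaIntegral hu hv
  have huv : ((A:ℂ) + t*Complex.I) + ((A:ℂ) - t*Complex.I) = ((2*A : ℝ) : ℂ) := by
    push_cast; ring
  rw [huv, Complex.Gamma_ofReal, beta_eq_real_integral] at beta
  have hne : (Real.Gamma (2*A) : ℂ) ≠ 0 := by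
    exact_mod_cast (Real.Gamma_pos_of_pos (by linarith)).ne'
  rw [eq_div_iff hne, mul_comm]
  exact beta.symm

lemma integrable_GGc' (A : ℝ) (hA : 0 < A) : Integrable (fun x : ℝ => (GG A x : ℂ)) := by
  have hu : 0 < ((A:ℂ) + (0:ℝ)*Complex.I).re := by simp [hA]
  have hv : 0 < ((A:ℂ) - (0:ℝ)*Complex.I).re := by simp [hA]
  have h := (Complex.betaIntegral_convergent hu hv).1
  have h2 : IntegrableOn (fun x : ℝ =>
      (x : ℂ) ^ (((A:ℂ) + (0:ℝ)*Complex.I) - 1) * (1 - (x : ℂ)) ^ (((A:ℂ) - (0:ℝ)*Complex.I) - 1))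
      (Set.Ioo (0:ℝ) 1) := h.mono_set Set.Ioo_subset_Ioc_self
  rw [← sg_image, integrableOn_image_iff_integrableOn_abs_deriv_smul MeasurableSet.univ
      (fun y _ => (hasDerivAt_sg y).hasDerivWithinAt) (sg_strictMono.injective.injOn)] at h2
  rw [← integrableOn_univ]
  apply h2.congr_fun _ MeasurableSet.univ
  intro y _
  simpa using sg_point A 0 y

lemma integrable_GG (A : ℝ) (hA : 0 < A) : Integrable (GG A) := by
  have := (integrable_GGc' A hA).norm
  apply this.congr
  filter_upwards with x
  simp [Complex.norm_real, abs_of_pos (GG_pos A x)]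

lemma integral_GG (A : ℝ) (hA : 0 < A) :
    ∫ y : ℝ, (GG A y : ℂ) = ((Real.Gamma A ^ 2 / Real.Gamma (2*A) : ℝ) : ℂ) := by
  have := fourier_GG A hA 0
  simp only [Complex.ofReal_zero, zero_mul, Complex.exp_zero, one_mul] at this
  rw [this]
  push_cast
  rw [← Complex.Gamma_ofReal, ← Complex.Gamma_ofReal]
  push_cast
  ring_nf

noncomputable def GG1 (A x : ℝ) : ℝ :=
  Real.sinh (x/2) * (-(2*A)) * (2 * Real.cosh (x/2)) ^ (-(2*A)-1)

noncomputable def GG2 (A x : ℝ) : ℝ :=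
  (Real.cosh (x/2)/2 * (-(2*A))) * (2 * Real.cosh (x/2)) ^ (-(2*A)-1)
  + (Real.sinh (x/2) * (-(2*A))) *
      (Real.sinh (x/2) * (-(2*A)-1) * (2 * Real.cosh (x/2)) ^ (-(2*A)-1-1))

lemma hasDerivAt_two_cosh (x : ℝ) :
    HasDerivAt (fun x : ℝ => 2 * Real.cosh (x/2)) (Real.sinh (x/2)) x := by
  have h := ((Real.hasDerivAt_cosh (x/2)).comp x ((hasDerivAt_id x).div_const 2)).const_mul 2
  refine h.congr_deriv ?_
  ring

lemma hasDerivAt_half_sinh (x : ℝ) :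
    HasDerivAt (fun x : ℝ => Real.sinh (x/2) * (-(2*A'))) (Real.cosh (x/2)/2 * (-(2*A'))) x := by
  have h := ((Real.hasDerivAt_sinh (x/2)).comp x ((hasDerivAt_id x).div_const 2)).mul_const (-(2*A'))
  refine h.congr_deriv ?_
  ring

lemma hasDerivAt_GG (A x : ℝ) : HasDerivAt (GG A) (GG1 A x) x := by
  have h := (hasDerivAt_two_cosh x).rpow_const (p := -(2*A)) (Or.inl (two_cosh_pos x).ne')
  exact h

lemma hasDerivAt_rpow_q (q x : ℝ) :
    HasDerivAt (fun x : ℝ => (2 * Real.cosh (x/2)) ^ q)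
      (Real.sinh (x/2) * q * (2 * Real.cosh (x/2)) ^ (q-1)) x :=
  (hasDerivAt_two_cosh x).rpow_const (Or.inl (two_cosh_pos x).ne')

lemma hasDerivAt_GG1 (A x : ℝ) : HasDerivAt (GG1 A) (GG2 A x) x := by
  have h := (hasDerivAt_half_sinh (A' := A) x).mul (hasDerivAt_rpow_q (-(2*A)-1) x)
  exact h

lemma abs_sinh_le_cosh (y : ℝ) : |Real.sinh y| ≤ Real.cosh y := by
  have h := Real.cosh_sq y
  have hp := Real.cosh_pos y
  rw [abs_le]
  constructor <;> nlinarith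

lemma rpow_succ_c (x q : ℝ) :
    (2 * Real.cosh (x/2)) * (2 * Real.cosh (x/2)) ^ q = (2 * Real.cosh (x/2)) ^ (q+1) := by
  rw [Real.rpow_add (two_cosh_pos x), Real.rpow_one]
  ring

lemma GG1_abs_le (A : ℝ) (hA : 0 < A) (x : ℝ) : |GG1 A x| ≤ A * GG A x := by
  have hc := two_cosh_pos x
  have hrp : (0:ℝ) < (2 * Real.cosh (x/2)) ^ (-(2*A)-1) := Real.rpow_pos_of_pos hc _
  have hs := abs_sinh_le_cosh (x/2)
  have hGG : GG A x = (2 * Real.cosh (x/2)) * (2 * Real.cosh (x/2)) ^ (-(2*A)-1) := by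
    rw [rpow_succ_c, GG]; norm_num
  rw [GG1, abs_mul, abs_mul, abs_of_pos hrp, abs_neg, abs_of_pos (by positivity : (0:ℝ) < 2*A),
    hGG]
  have hch := Real.cosh_pos (x/2)
  nlinarith [mul_le_mul_of_nonneg_right
    (mul_le_mul_of_nonneg_right hs (by positivity : (0:ℝ) ≤ 2*A)) hrp.le]
lemma GG2_abs_le (A : ℝ) (hA : 0 < A) (x : ℝ) : |GG2 A x| ≤ (A*(2*A+2)) * GG A x := by
  have hc := two_cosh_pos x
  have hrp : (0:ℝ) < (2 * Real.cosh (x/2)) ^ (-(2*A)-1) := Real.rpow_pos_of_pos hc _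
  have hrp2 : (0:ℝ) < (2 * Real.cosh (x/2)) ^ (-(2*A)-1-1) := Real.rpow_pos_of_pos hc _
  have hs := abs_sinh_le_cosh (x/2)
  have hch := Real.cosh_pos (x/2)
  have hs2 : Real.sinh (x/2)^2 = Real.cosh (x/2)^2 - 1 := Real.sinh_sq (x/2)
  have hGG : GG A x = (2 * Real.cosh (x/2)) * (2 * Real.cosh (x/2)) ^ (-(2*A)-1) := by
    rw [rpow_succ_c, GG]; norm_num
  have hGG' : GG A x = ((2 * Real.cosh (x/2)) * (2 * Real.cosh (x/2))) *
      (2 * Real.cosh (x/2)) ^ (-(2*A)-1-1) := by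
    rw [mul_assoc, rpow_succ_c, rpow_succ_c, GG]; norm_num
  refine (abs_add_le _ _).trans ?_
  have h1 : |(Real.cosh (x/2)/2 * (-(2*A))) * (2 * Real.cosh (x/2)) ^ (-(2*A)-1)|
      ≤ (A/2) * GG A x := by
    rw [abs_mul, abs_of_pos hrp, abs_mul, abs_neg, abs_of_pos (by positivity : (0:ℝ) < 2*A),
      abs_of_pos (by positivity : (0:ℝ) < Real.cosh (x/2)/2), hGG]
    nlinarith
  have h2 : |(Real.sinh (x/2) * (-(2*A))) *
      (Real.sinh (x/2) * (-(2*A)-1) * (2 * Real.cosh (x/2)) ^ (-(2*A)-1-1))|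
      ≤ (A*(2*A+1)/2) * GG A x := by
    have habs : |(Real.sinh (x/2) * (-(2*A))) *
        (Real.sinh (x/2) * (-(2*A)-1) * (2 * Real.cosh (x/2)) ^ (-(2*A)-1-1))|
        = (|Real.sinh (x/2)| * (2*A)) * (|Real.sinh (x/2)| * (2*A+1) *
            (2 * Real.cosh (x/2)) ^ (-(2*A)-1-1)) := by
      rw [abs_mul, abs_mul, abs_mul, abs_mul, abs_neg,
        abs_of_pos (by positivity : (0:ℝ) < 2*A), abs_of_pos hrp2,
        abs_of_neg (by linarith : -(2*A)-1 < 0)]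
      ring_nf
    rw [habs, hGG']
    have hsa : |Real.sinh (x/2)| * |Real.sinh (x/2)| ≤ Real.cosh (x/2) * Real.cosh (x/2) := by
      nlinarith [abs_nonneg (Real.sinh (x/2))]
    have key := mul_le_mul_of_nonneg_right hsa hrp2.le
    nlinarith [mul_le_mul_of_nonneg_left key
      (by positivity : (0:ℝ) ≤ (2*A)*(2*A+1))]
  have hsum := add_le_add h1 h2
  refine hsum.trans ?_
  have hgp := GG_pos A x
  have h3 : (0:ℝ) ≤ A*(A+1)*GG A x := by positivity
  nlinarith

lemma GG_mul_GG2 (A x : ℝ) :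
    GG A x * GG2 A x = A^2 * GG (2*A) x - (2*A*(2*A+1)) * GG (2*A+1) x := by
  have hc := two_cosh_pos x
  have hs2 : Real.sinh (x/2)^2 = Real.cosh (x/2)^2 - 1 := Real.sinh_sq (x/2)
  have e1 : (2 * Real.cosh (x/2)) ^ (-(2*A)) * (2 * Real.cosh (x/2)) ^ (-(2*A)-1)
      = (2 * Real.cosh (x/2)) * (2 * Real.cosh (x/2)) ^ (-(2*(2*A)+1)-1) := by
    rw [← Real.rpow_add hc, rpow_succ_c]
    congr 1
    ring
  have e2 : (2 * Real.cosh (x/2)) ^ (-(2*A)) * (2 * Real.cosh (x/2)) ^ (-(2*A)-1-1)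
      = (2 * Real.cosh (x/2)) ^ (-(2*(2*A)+1)-1) := by
    rw [← Real.rpow_add hc]
    congr 1
    ring
  have e3 : GG (2*A) x = ((2 * Real.cosh (x/2)) * (2 * Real.cosh (x/2))) *
      (2 * Real.cosh (x/2)) ^ (-(2*(2*A)+1)-1) := by
    rw [mul_assoc, rpow_succ_c, rpow_succ_c, GG]
    congr 1
    ring
  have e4 : GG (2*A+1) x = (2 * Real.cosh (x/2)) ^ (-(2*(2*A)+1)-1) := by
    rw [GG]
    congr 1
    ring
  rw [GG, GG2, e3, e4]
  linear_combination (-(A) * Real.cosh (x/2)) * e1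
    + (2*A*(2*A+1)*Real.sinh (x/2)^2) * e2
    + (2*A*(2*A+1)*(2*Real.cosh (x/2))^(-(2*(2*A)+1)-1)) * hs2

section cont
variable (A : ℝ)

lemma continuous_two_cosh : Continuous fun x : ℝ => 2 * Real.cosh (x/2) := by continuity

lemma continuous_GG : Continuous (GG A) :=
  (continuous_two_cosh).rpow_const fun x => Or.inl (two_cosh_pos x).ne'

lemma continuous_GG1 : Continuous (GG1 A) := by
  apply Continuous.mul
  · exact (Real.continuous_sinh.comp (continuous_id.div_const 2)).mul continuous_const
  · exact (continuous_two_cosh).rpow_const fun x => Or.inl (two_cosh_pos x).ne'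

lemma continuous_GG2 : Continuous (GG2 A) := by
  apply Continuous.add
  · exact (((Real.continuous_cosh.comp (continuous_id.div_const 2)).div_const 2).mul
      continuous_const).mul ((continuous_two_cosh).rpow_const fun x => Or.inl (two_cosh_pos x).ne')
  · exact ((Real.continuous_sinh.comp (continuous_id.div_const 2)).mul continuous_const).mul
      (((Real.continuous_sinh.comp (continuous_id.div_const 2)).mul continuous_const).mul
        ((continuous_two_cosh).rpow_const fun x => Or.inl (two_cosh_pos x).ne'))
end cont

lemma integrable_GG1 (A : ℝ) (hA : 0 < A) : Integrable (GG1 A) := by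
  refine Integrable.mono' ((integrable_GG A hA).const_mul A)
    (continuous_GG1 A).aestronglyMeasurable ?_
  filter_upwards with x
  rw [Real.norm_eq_abs]
  exact GG1_abs_le A hA x

lemma integrable_GG2 (A : ℝ) (hA : 0 < A) : Integrable (GG2 A) := by
  refine Integrable.mono' ((integrable_GG A hA).const_mul (A*(2*A+2)))
    (continuous_GG2 A).aestronglyMeasurable ?_
  filter_upwards with x
  rw [Real.norm_eq_abs]
  exact GG2_abs_le A hA x

-- complex versions
lemma integrable_GG1c (A : ℝ) (hA : 0 < A) : Integrable fun x : ℝ => ((GG1 A x : ℝ) : ℂ) :=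
  (integrable_GG1 A hA).ofReal
lemma integrable_GG2c (A : ℝ) (hA : 0 < A) : Integrable fun x : ℝ => ((GG2 A x : ℝ) : ℂ) :=
  (integrable_GG2 A hA).ofReal

lemma deriv_GGc (A : ℝ) :
    deriv (fun x : ℝ => ((GG A x : ℝ) : ℂ)) = fun x => ((GG1 A x : ℝ) : ℂ) :=
  funext fun x => ((hasDerivAt_GG A x).ofReal_comp).deriv

lemma deriv_GG1c (A : ℝ) :
    deriv (fun x : ℝ => ((GG1 A x : ℝ) : ℂ)) = fun x => ((GG2 A x : ℝ) : ℂ) :=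
  funext fun x => ((hasDerivAt_GG1 A x).ofReal_comp).deriv

lemma fourier_GG1c (A : ℝ) (hA : 0 < A) :
    𝓕 (fun x : ℝ => ((GG1 A x : ℝ) : ℂ))
      = fun ξ : ℝ => (2 * ↑π * Complex.I * ↑ξ) • 𝓕 (fun x : ℝ => ((GG A x : ℝ) : ℂ)) ξ := by
  rw [← deriv_GGc A]
  exact Real.fourier_deriv (integrable_GGc' A hA)
    (fun x => ((hasDerivAt_GG A x).ofReal_comp).differentiableAt)
    ((deriv_GGc A) ▸ integrable_GG1c A hA)

lemma fourier_GG2c (A : ℝ) (hA : 0 < A) :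
    𝓕 (fun x : ℝ => ((GG2 A x : ℝ) : ℂ))
      = fun ξ : ℝ => (2 * ↑π * Complex.I * ↑ξ) •
          ((2 * ↑π * Complex.I * ↑ξ) • 𝓕 (fun x : ℝ => ((GG A x : ℝ) : ℂ)) ξ) := by
  rw [← deriv_GG1c A]
  have h := Real.fourier_deriv (integrable_GG1c A hA)
    (fun x => ((hasDerivAt_GG1 A x).ofReal_comp).differentiableAt)
    ((deriv_GG1c A) ▸ integrable_GG2c A hA)
  rw [h, fourier_GG1c A hA]

lemma real_fourier_eq (f : ℝ → ℂ) :
    𝓕 f = VectorFourier.fourierIntegral 𝐞 volume (innerₗ ℝ) f := rfl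

lemma hL_cont : Continuous fun p : ℝ × ℝ => innerₗ ℝ p.1 p.2 := by
  simp only [innerₗ_apply_apply]
  exact continuous_inner

lemma norm_fourier_le (f : ℝ → ℂ) (ξ : ℝ) : ‖𝓕 f ξ‖ ≤ ∫ x, ‖f x‖ :=
  VectorFourier.norm_fourierIntegral_le_integral_norm 𝐞 volume (innerₗ ℝ) f ξ

lemma continuous_fourier {f : ℝ → ℂ} (hf : Integrable f) : Continuous (𝓕 f) := by
  rw [real_fourier_eq]
  exact VectorFourier.fourierIntegral_continuous Real.continuous_fourierChar hL_cont hf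

lemma norm_two_pi_I (ξ : ℝ) : ‖(2 * ↑π * Complex.I * ↑ξ : ℂ)‖ = 2*π*|ξ| := by
  simp [norm_mul, Complex.norm_real, Real.norm_eq_abs, abs_of_pos Real.pi_pos]

lemma fourier_GG_eval (A : ℝ) (hA : 0 < A) (ξ : ℝ) :
    𝓕 (fun x : ℝ => ((GG A x : ℝ) : ℂ)) ξ
      = Complex.Gamma ((A:ℂ) + (-(2*π*ξ) : ℝ)*Complex.I) *
          Complex.Gamma ((A:ℂ) - (-(2*π*ξ) : ℝ)*Complex.I) / (Real.Gamma (2*A) : ℂ) := by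
  rw [Real.fourier_real_eq_integral_exp_smul]
  rw [show (∫ v : ℝ, Complex.exp (↑(-2 * π * v * ξ) * Complex.I) • ((GG A v : ℝ) : ℂ))
      = ∫ v : ℝ, Complex.exp (↑(-(2*π*ξ)) * ↑v * Complex.I) * ((GG A v : ℝ) : ℂ) from
    integral_congr_ae (Filter.Eventually.of_forall fun v => by
      simp only [smul_eq_mul]; congr 2; push_cast; ring)]
  exact fourier_GG A hA (-(2*π*ξ))

lemma integrable_fourier_GG (A : ℝ) (hA : 0 < A) :
    Integrable (𝓕 (fun x : ℝ => ((GG A x : ℝ) : ℂ))) := by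
  set g := 𝓕 (fun x : ℝ => ((GG A x : ℝ) : ℂ)) with hg
  set C0 : ℝ := ∫ x : ℝ, ‖((GG A x : ℝ) : ℂ)‖ with hC0
  set C2 : ℝ := ∫ x : ℝ, ‖((GG2 A x : ℝ) : ℂ)‖ with hC2
  have hπ : (0:ℝ) < π := Real.pi_pos
  have key : ∀ ξ : ℝ, (1 + ξ^2) * ‖g ξ‖ ≤ C0 + C2/(4*π^2) := by
    intro ξ
    have h0 : ‖g ξ‖ ≤ C0 := norm_fourier_le _ ξ
    have h2 : ‖𝓕 (fun x : ℝ => ((GG2 A x : ℝ) : ℂ)) ξ‖ ≤ C2 := norm_fourier_le _ ξ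
    rw [fourier_GG2c A hA] at h2
    have hnorm : ‖(2 * ↑π * Complex.I * ↑ξ : ℂ) • ((2 * ↑π * Complex.I * ↑ξ : ℂ) • g ξ)‖
        = (2*π*|ξ|)^2 * ‖g ξ‖ := by
      rw [norm_smul, norm_smul, norm_two_pi_I]
      ring
    rw [hnorm] at h2
    have habs : (2*π*|ξ|)^2 = 4*π^2*ξ^2 := by
      rw [mul_pow, mul_pow, _root_.sq_abs]; ring
    rw [habs] at h2
    have hξ2 : ξ^2 * ‖g ξ‖ ≤ C2/(4*π^2) := by
      rw [le_div_iff₀ (by positivity)]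
      nlinarith [norm_nonneg (g ξ)]
    nlinarith [norm_nonneg (g ξ)]
  have hcont : Continuous g := continuous_fourier (integrable_GGc' A hA)
  refine ((integrable_inv_one_add_sq.const_mul (C0 + C2/(4*π^2))).mono'
    hcont.aestronglyMeasurable ?_)
  filter_upwards with ξ
  have h1 : (0:ℝ) < 1 + ξ^2 := by positivity
  rw [← div_eq_mul_inv, le_div_iff₀ h1]
  nlinarith [key ξ]

lemma GG_even (A x : ℝ) : GG A (-x) = GG A x := by
  simp [GG, neg_div]

lemma J_eq (A : ℝ) (hA : 0 < A) :
    ∫ ξ : ℝ, 𝓕 (fun x : ℝ => ((GG2 A x : ℝ) : ℂ)) ξ • 𝓕 (fun x : ℝ => ((GG A x : ℝ) : ℂ)) ξ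
      = ∫ x : ℝ, ((GG2 A x : ℝ) : ℂ) * ((GG A x : ℝ) : ℂ) := by
  have mult := VectorFourier.integral_fourierIntegral_smul_eq_flip (L := innerₗ ℝ)
    Real.continuous_fourierChar hL_cont (integrable_GG2c A hA) (integrable_fourier_GG A hA)
  rw [flip_innerₗ] at mult
  have hinv : ∀ x : ℝ, 𝓕 (𝓕 (fun x : ℝ => ((GG A x : ℝ) : ℂ))) x = ((GG A x : ℝ) : ℂ) := by
    intro x
    have h1 : 𝓕 (𝓕 (fun x : ℝ => ((GG A x : ℝ) : ℂ))) x
        = 𝓕⁻ (𝓕 (fun x : ℝ => ((GG A x : ℝ) : ℂ))) (-x) := by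
      rw [Real.fourierInv_eq_fourier_neg, neg_neg]
    rw [h1, Continuous.fourierInv_fourier_eq (f := fun x : ℝ => ((GG A x : ℝ) : ℂ))
      (Complex.continuous_ofReal.comp (continuous_GG A))
      (integrable_GGc' A hA) (integrable_fourier_GG A hA)]
    show ((GG A (-x) : ℝ) : ℂ) = _
    rw [GG_even]
  calc ∫ ξ : ℝ, 𝓕 (fun x : ℝ => ((GG2 A x : ℝ) : ℂ)) ξ • 𝓕 (fun x : ℝ => ((GG A x : ℝ) : ℂ)) ξ
      = ∫ x : ℝ, ((GG2 A x : ℝ) : ℂ) •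
          𝓕 (𝓕 (fun x : ℝ => ((GG A x : ℝ) : ℂ))) x := mult
    _ = ∫ x : ℝ, ((GG2 A x : ℝ) : ℂ) * ((GG A x : ℝ) : ℂ) := by
        refine integral_congr_ae (Filter.Eventually.of_forall fun x => ?_)
        simp only [smul_eq_mul, hinv x]

lemma J_val (A : ℝ) (hA : 0 < A) :
    ∫ ξ : ℝ, ((2*↑π*Complex.I*↑ξ) * (2*↑π*Complex.I*↑ξ)) *
        (𝓕 (fun x : ℝ => ((GG A x : ℝ) : ℂ)) ξ * 𝓕 (fun x : ℝ => ((GG A x : ℝ) : ℂ)) ξ)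
      = ((A^2 * (Real.Gamma (2*A)^2/Real.Gamma (2*(2*A)))
          - (2*A*(2*A+1)) * (Real.Gamma (2*A+1)^2/Real.Gamma (2*(2*A+1))) : ℝ) : ℂ) := by
  have h1 : ∀ ξ : ℝ, ((2*↑π*Complex.I*↑ξ) * (2*↑π*Complex.I*↑ξ)) *
        (𝓕 (fun x : ℝ => ((GG A x : ℝ) : ℂ)) ξ * 𝓕 (fun x : ℝ => ((GG A x : ℝ) : ℂ)) ξ)
      = 𝓕 (fun x : ℝ => ((GG2 A x : ℝ) : ℂ)) ξ • 𝓕 (fun x : ℝ => ((GG A x : ℝ) : ℂ)) ξ := by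
    intro ξ
    rw [fourier_GG2c A hA]
    simp only [smul_eq_mul]
    ring
  rw [integral_congr_ae (Filter.Eventually.of_forall h1), J_eq A hA]
  have h2 : ∀ x : ℝ, ((GG2 A x : ℝ) : ℂ) * ((GG A x : ℝ) : ℂ)
      = ((A^2 : ℝ) : ℂ) * ((GG (2*A) x : ℝ) : ℂ)
        - ((2*A*(2*A+1) : ℝ) : ℂ) * ((GG (2*A+1) x : ℝ) : ℂ) := by
    intro x
    rw [← Complex.ofReal_mul, mul_comm (GG2 A x), GG_mul_GG2 A x]
    push_cast
    ring
  rw [integral_congr_ae (Filter.Eventually.of_forall h2)]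
  rw [integral_sub (((integrable_GGc' (2*A) (by linarith))).const_mul _)
    (((integrable_GGc' (2*A+1) (by linarith))).const_mul _),
    integral_const_mul, integral_const_mul, integral_GG (2*A) (by linarith),
    integral_GG (2*A+1) (by linarith)]
  push_cast
  ring

/-- second moment of the `|Γ|⁴` density: for `a, b > 0`,
`(bΓ(4a)/(2πΓ(2a)⁴)) ∫ s² |Γ(a+ibs)|⁴ ds = a²/(b²(1+4a))`. -/
theorem gamma_fourth_power_second_moment (a b : ℝ) (ha : 0 < a) (hb : 0 < b) :
    ((b * Real.Gamma (4 * a) / (2 * Real.pi * (Real.Gamma (2 * a)) ^ 4) : ℝ) : ℂ) *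
      ∫ s : ℝ, (s : ℂ) ^ 2 * (Complex.Gamma (a + Complex.I * (b * s)) *
        Complex.Gamma (a - Complex.I * (b * s))) ^ 2
      = ((a ^ 2 / (b ^ 2 * (1 + 4 * a)) : ℝ) : ℂ) := by
  have hπ : (0:ℝ) < π := Real.pi_pos
  have hΓ2a : (0:ℝ) < Real.Gamma (2*a) := Real.Gamma_pos_of_pos (by linarith)
  have hΓ2aC : ((Real.Gamma (2*a) : ℝ) : ℂ) ≠ 0 := by exact_mod_cast hΓ2a.ne'
  have hbC : ((b:ℝ):ℂ) ≠ 0 := by exact_mod_cast hb.ne'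
  set P : ℝ → ℂ := fun ξ : ℝ => ((2*↑π*Complex.I*↑ξ) * (2*↑π*Complex.I*↑ξ)) *
        (𝓕 (fun x : ℝ => ((GG a x : ℝ) : ℂ)) ξ * 𝓕 (fun x : ℝ => ((GG a x : ℝ) : ℂ)) ξ)
    with hP
  -- pointwise identity
  have hpoint : ∀ s : ℝ, (s : ℂ) ^ 2 * (Complex.Gamma (a + Complex.I * (b * s)) *
        Complex.Gamma (a - Complex.I * (b * s))) ^ 2
      = (-(((Real.Gamma (2*a) : ℝ) : ℂ))^2 / ((b:ℝ):ℂ)^2) * P (b/(2*π) * s) := by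
    intro s
    rw [hP]
    simp only []
    rw [fourier_GG_eval a ha (b/(2*π) * s)]
    have harg : (-(2*π*(b/(2*π)*s)) : ℝ) = -(b*s) := by field_simp
    rw [harg]
    have hg1 : Complex.Gamma ((a:ℂ) + ((-(b*s) : ℝ) : ℂ)*Complex.I)
        = Complex.Gamma ((a:ℂ) - Complex.I * ((b:ℝ) * (s:ℝ) : ℂ)) := by
      congr 1; push_cast; ring
    have hg2 : Complex.Gamma ((a:ℂ) - ((-(b*s) : ℝ) : ℂ)*Complex.I)
        = Complex.Gamma ((a:ℂ) + Complex.I * ((b:ℝ) * (s:ℝ) : ℂ)) := by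
      congr 1; push_cast; ring
    rw [hg1, hg2]
    have hξ : ((b/(2*π)*s : ℝ) : ℂ) = ↑b * ↑s / (2*↑π) := by push_cast; ring
    rw [hξ]
    have hπC : ((π:ℝ):ℂ) ≠ 0 := by exact_mod_cast hπ.ne'
    have hIc : (2*(↑π:ℂ)*Complex.I*(↑b*↑s/(2*↑π))) = Complex.I*(↑b*↑s) := by
      field_simp
    rw [hIc]
    have hII : (Complex.I*((↑b:ℂ)*↑s))*(Complex.I*((↑b:ℂ)*↑s)) = -((↑b:ℂ)^2*(↑s:ℂ)^2) := by
      calc (Complex.I*((↑b:ℂ)*↑s))*(Complex.I*((↑b:ℂ)*↑s))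
          = Complex.I^2 * (((↑b:ℂ)*↑s)*((↑b:ℂ)*↑s)) := by ring
        _ = -((↑b:ℂ)^2*(↑s:ℂ)^2) := by rw [Complex.I_sq]; ring
    rw [hII]
    field_simp
  rw [integral_congr_ae (Filter.Eventually.of_forall hpoint), integral_const_mul,
    MeasureTheory.Measure.integral_comp_mul_left P (b/(2*π)), J_val a ha]
  have habs : |(b/(2*π))⁻¹| = 2*π/b := by
    rw [abs_of_pos (by positivity)]
    field_simp
  rw [habs]
  -- now pure real arithmetic
  have h1 : Real.Gamma (2*a+1) = 2*a*Real.Gamma (2*a) :=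
    Real.Gamma_add_one (by positivity)
  have h2 : Real.Gamma (2*(2*a+1)) = (4*a+1)*((4*a)*Real.Gamma (4*a)) := by
    rw [show 2*(2*a+1) = (4*a+1)+1 by ring, Real.Gamma_add_one (by positivity),
      Real.Gamma_add_one (by positivity)]
  have h3 : Real.Gamma (2*(2*a)) = Real.Gamma (4*a) := by ring_nf
  have hΓ4a : (0:ℝ) < Real.Gamma (4*a) := Real.Gamma_pos_of_pos (by linarith)
  rw [h3, Complex.real_smul,
    show (-(((Real.Gamma (2*a) : ℝ) : ℂ))^2 / ((b:ℝ):ℂ)^2)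
      = (((-(Real.Gamma (2*a))^2 / b^2 : ℝ)) : ℂ) by push_cast; ring,
    ← Complex.ofReal_mul, ← Complex.ofReal_mul, ← Complex.ofReal_mul, Complex.ofReal_inj, h1, h2]
  have hD : a^2*(Real.Gamma (2*a)^2/Real.Gamma (4*a))
      - (2*a*(2*a+1))*((2*a*Real.Gamma (2*a))^2/((4*a+1)*((4*a)*Real.Gamma (4*a))))
      = -(a^2*Real.Gamma (2*a)^2)/((4*a+1)*Real.Gamma (4*a)) := by
    field_simp
    ring
  rw [hD]
  field_simp
  ring
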